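/- arXiv:2405.03227 — 3 statements merged into one kernel-verified Lean document; each statement's English description precedes it below -/
import Mathlib

section
/- Let k ≥ 1 and let z : ℕ → ℝ satisfy z(n+k) = z(n)/(A(n) + B(n)·z(n)) for all n, where all z(n) ≠ 0 and all denominators are nonzero. Then for all n ≥ 0 and 0 ≤ j < k, z(k·n + j) = z(j) / ( (∏_{i=0}^{n-1} A(k·i + j)) + z(j) · ∑_{l=0}^{n-1} B(k·l + j) · ∏_{i=l+1}^{n-1} A(k·i + j) ). -/
theorem stmt_2 (k : ℕ) (hk : 1 ≤ k) (A B z : ℕ → ℝ)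
    (hrec : ∀ n, z (n + k) = z n / (A n + B n * z n))
    (hz : ∀ n, z n ≠ 0)
    (hden : ∀ n, A n + B n * z n ≠ 0) :
    ∀ n, ∀ j < k, z (k * n + j) =
      z j / ((∏ i ∈ Finset.range n, A (k * i + j)) +
        z j * ∑ l ∈ Finset.range n, B (k * l + j) * ∏ i ∈ Finset.Ico (l + 1) n, A (k * i + j)) := by
  intro n j hj
  induction n with
  | zero => simp
  | succ n ih =>
    set P := ∏ i ∈ Finset.range n, A (k * i + j) with hP
    set S := ∑ l ∈ Finset.range n, B (k * l + j) * ∏ i ∈ Finset.Ico (l + 1) n, A (k * i + j)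
      with hS
    have hP' : ∏ i ∈ Finset.range (n + 1), A (k * i + j) = P * A (k * n + j) :=
      Finset.prod_range_succ _ _
    have hS' : ∑ l ∈ Finset.range (n + 1), B (k * l + j) *
        ∏ i ∈ Finset.Ico (l + 1) (n + 1), A (k * i + j)
        = S * A (k * n + j) + B (k * n + j) := by
      rw [Finset.sum_range_succ, hS, Finset.sum_mul]
      congr 1
      · apply Finset.sum_congr rfl
        intro l hl
        rw [Finset.mem_range] at hl
        rw [Finset.prod_Ico_succ_top (Nat.succ_le_of_lt hl), mul_assoc]
      · simp
    have hD : P + z j * S ≠ 0 := by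
      intro h0
      apply hz (k * n + j)
      rw [ih, h0, div_zero]
    have hidx : k * (n + 1) + j = (k * n + j) + k := by ring
    have hd := hden (k * n + j)
    rw [ih] at hd
    rw [hidx, hrec, ih, hP', hS']
    field_simp
    ring
end

section
/- Let |A| > 1, B ≠ 0, k ≥ 1, and let z : ℕ → ℝ satisfy z(n+k) = z(n)/(A + B·z(n)) with all denominators nonzero and all z(n) ≠ 0. If for each j < k, A^n + z(j)·B·(1 - A^n)/(1 - A) ≠ 0 for all n, then z(n) → 0 as n → ∞ whenever z(j) ≠ (1-A)/B for all j < k. In particular, using the closed form, z(k·n+j) = z(j)/(A^n + z(j)·B·(1-A^n)/(1-A)) tends to 0 as n → ∞ when z(j) ≠ (1-A)/B. -/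
open Filter

theorem stmt_11 (k : ℕ) (hk : 1 ≤ k) (A B : ℝ) (hA : 1 < |A|) (hB : B ≠ 0)
    (z : ℕ → ℝ)
    (hrec : ∀ n, z (n + k) = z n / (A + B * z n))
    (hden : ∀ n, A + B * z n ≠ 0)
    (hz : ∀ n, z n ≠ 0)
    (hden2 : ∀ j < k, ∀ n : ℕ, A ^ n + z j * B * (1 - A ^ n) / (1 - A) ≠ 0)
    (hne : ∀ j < k, z j ≠ (1 - A) / B) :
    Filter.Tendsto z Filter.atTop (nhds 0) ∧
    ∀ j < k, Filter.Tendsto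
      (fun n : ℕ => z j / (A ^ n + z j * B * (1 - A ^ n) / (1 - A)))
      Filter.atTop (nhds 0) := by
  have hA1 : (1 : ℝ) - A ≠ 0 := by
    intro h
    have : A = 1 := by linarith
    rw [this] at hA; norm_num at hA
  -- closed form
  have hcf : ∀ j < k, ∀ n, z (k * n + j)
      = z j / (A ^ n + z j * B * (1 - A ^ n) / (1 - A)) := by
    intro j hj n
    induction n with
    | zero => simp
    | succ n ih =>
      have hDn := hden2 j hj n
      have hDn1 := hden2 j hj (n + 1)
      have hAB := hden (k * n + j)
      rw [ih] at hAB
      have hstep : k * (n + 1) + j = (k * n + j) + k := by ring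
      rw [hstep, hrec, ih]
      have h1 : (A + B * (z j / (A ^ n + z j * B * (1 - A ^ n) / (1 - A))))
          * (A ^ n + z j * B * (1 - A ^ n) / (1 - A))
          = A * (A ^ n + z j * B * (1 - A ^ n) / (1 - A)) + B * z j := by
        rw [add_mul, mul_assoc B, div_mul_cancel₀ _ hDn]
      have hrw2 : A + B * (z j / (A ^ n + z j * B * (1 - A ^ n) / (1 - A)))
          = (A * (A ^ n + z j * B * (1 - A ^ n) / (1 - A)) + B * z j)
            / (A ^ n + z j * B * (1 - A ^ n) / (1 - A)) :=
        eq_div_of_mul_eq hDn h1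
      rw [hrw2, div_div_div_cancel_right₀ hDn]
      congr 1
      field_simp
      ring
  -- tendsto of closed form
  have htend : ∀ j < k, Tendsto
      (fun n : ℕ => z j / (A ^ n + z j * B * (1 - A ^ n) / (1 - A)))
      atTop (nhds 0) := by
    intro j hj
    set c : ℝ := z j * B / (1 - A) with hc
    have hcne : (1 : ℝ) - c ≠ 0 := by
      intro h
      apply hne j hj
      have : z j * B = 1 - A := by
        rw [hc] at h; field_simp at h
        linarith [h]
      field_simp
      linarith [this]
    have heq : ∀ n : ℕ, A ^ n + z j * B * (1 - A ^ n) / (1 - A)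
        = A ^ n * (1 - c) + c := by
      intro n
      rw [hc]; field_simp
      ring
    have habs : Tendsto (fun n : ℕ => |A ^ n * (1 - c) + c|) atTop atTop := by
      have h1 : Tendsto (fun n : ℕ => |A| ^ n * |1 - c| + -|c|) atTop atTop := by
        apply tendsto_atTop_add_const_right
        exact (tendsto_pow_atTop_atTop_of_one_lt hA).atTop_mul_const
          (abs_pos.mpr hcne)
      apply tendsto_atTop_mono' atTop ?_ h1
      filter_upwards with n
      have h2 : |A ^ n * (1 - c)| ≤ |A ^ n * (1 - c) + c| + |c| := by
        calc |A ^ n * (1 - c)| = |(A ^ n * (1 - c) + c) + (-c)| := by ring_nf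
        _ ≤ |A ^ n * (1 - c) + c| + |(-c)| := abs_add_le _ _
        _ = |A ^ n * (1 - c) + c| + |c| := by rw [abs_neg]
      rw [abs_mul, abs_pow] at h2
      linarith
    have : Tendsto (fun n : ℕ => |z j| / |A ^ n * (1 - c) + c|) atTop (nhds 0) :=
      Tendsto.div_atTop tendsto_const_nhds habs
    have h3 : Tendsto (fun n : ℕ => z j / (A ^ n + z j * B * (1 - A ^ n) / (1 - A)))
        atTop (nhds 0) := by
      rw [tendsto_zero_iff_norm_tendsto_zero]
      simpa [heq, abs_div] using this
    exact h3
  refine ⟨?_, htend⟩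
  rw [Metric.tendsto_atTop]
  intro ε hε
  have hev : ∀ᶠ n in atTop, ∀ j ∈ Finset.range k, |z (k * n + j)| < ε := by
    rw [eventually_all_finset]
    intro j hj
    have hj' : j < k := Finset.mem_range.mp hj
    have := (htend j hj')
    rw [Metric.tendsto_atTop] at this
    obtain ⟨N, hN⟩ := this ε hε
    rw [eventually_atTop]
    refine ⟨N, fun n hn => ?_⟩
    rw [hcf j hj' n, ← Real.dist_0_eq_abs]
    exact hN n hn
  rw [eventually_atTop] at hev
  obtain ⟨M, hM⟩ := hev
  refine ⟨k * (M + 1), fun m hm => ?_⟩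
  have hq : M ≤ m / k := by
    have : M + 1 ≤ m / k := (Nat.le_div_iff_mul_le hk).mpr (by linarith [hm, Nat.mul_comm k (M+1)])
    omega
  have hmod : m % k < k := Nat.mod_lt _ hk
  have hrw : k * (m / k) + m % k = m := Nat.div_add_mod m k
  have := hM (m / k) hq (m % k) (Finset.mem_range.mpr hmod)
  rw [hrw] at this
  rwa [Real.dist_0_eq_abs]
end

section
/- Let ζ(n, z) = β(n)·z² with β : ℕ → ℝ satisfying β(n+k) = A(n)·β(n) and β(n) ≠ 0 for all n, and let 𝒜(n, z) = z/(A(n) + B(n)·z). Then for all n and all z with A(n) + B(n)·z ≠ 0: ζ(n+k, 𝒜(n,z)) - (∂𝒜/∂z)(n,z) · ζ(n, z) = 0, i.e., β(n+k)·(z/(A(n)+B(n)z))² = (A(n)/(A(n)+B(n)z)²)·β(n)·z². -/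
theorem stmt_19 (k : ℕ) (hk : 1 ≤ k) (A B β : ℕ → ℝ)
    (hβrec : ∀ n, β (n + k) = A n * β n) (hβ : ∀ n, β n ≠ 0) :
    ∀ n, ∀ z : ℝ, A n + B n * z ≠ 0 →
      β (n + k) * (z / (A n + B n * z)) ^ 2 =
        (A n / (A n + B n * z) ^ 2) * (β n * z ^ 2) := by
  intro n z h
  rw [hβrec]
  field_simp
end
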